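/- Under the hypotheses of the recursion lemma (B_{t+1} ≤ B_t − q·B_{t+1}^{p+1}, q(1+p)B_1^p ≤ 1, B_t ≥ 0), the sequence also satisfies B_{t+1} ≤ B_t − (q/2)·B_t^{p+1} for all t ≥ 1. -/

import Mathlib

/-- Under the hypotheses of the recursion lemma, the sequence also satisfies
`B (t+1) ≤ B t - (q/2) * B t ^ (p+1)` for all `t ≥ 1`. -/
theorem stmt1 (B : ℕ → ℝ) (p q : ℝ) (hp : 0 < p) (hq : 0 < q)
    (hB : ∀ t, 0 ≤ B t)
    (hrec : ∀ t ≥ 1, B (t + 1) ≤ B t - q * B (t + 1) ^ (p + 1))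
    (hinit : q * (1 + p) * B 1 ^ p ≤ 1) :
    ∀ t ≥ 1, B (t + 1) ≤ B t - (q / 2) * B t ^ (p + 1) := by
  have hmono : ∀ t ≥ 1, B (t + 1) ≤ B t := by
    intro t ht
    have h1 := hrec t ht
    have h2 : 0 ≤ B (t + 1) ^ (p + 1) := Real.rpow_nonneg (hB _) _
    nlinarith
  have hle1 : ∀ t ≥ 1, B t ≤ B 1 := by
    intro t ht
    induction t with
    | zero => omega
    | succ n ih =>
      rcases Nat.eq_or_lt_of_le ht with h | h
      · rw [← h]
      · have hn : n ≥ 1 := by omega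
        exact le_trans (hmono n hn) (ih hn)
  intro t ht
  by_cases h0 : B t = 0
  · have : B (t + 1) ≤ B t := hmono t ht
    rw [h0] at this ⊢
    rw [Real.zero_rpow (by positivity)]
    linarith
  have hBt : 0 < B t := lt_of_le_of_ne (hB t) (Ne.symm h0)
  set s : ℝ := (q / 2) * B t ^ p with hs_def
  have hs_nn : 0 ≤ s := by positivity
  have hs_half : (1 + p) * s ≤ 1 / 2 := by
    have h1 : B t ^ p ≤ B 1 ^ p :=
      Real.rpow_le_rpow (hB t) (hle1 t ht) hp.le
    have : q * (1 + p) * B t ^ p ≤ 1 := by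
      calc q * (1 + p) * B t ^ p ≤ q * (1 + p) * B 1 ^ p :=
            mul_le_mul_of_nonneg_left h1 (by positivity)
        _ ≤ 1 := hinit
    rw [hs_def]; nlinarith
  have hs_le : s ≤ 1 / 2 := by nlinarith
  set x : ℝ := B t - (q / 2) * B t ^ (p + 1) with hx_def
  have hrpow_add : B t ^ (p + 1) = B t ^ p * B t := by
    rw [Real.rpow_add_one h0]
  have hx_eq : x = B t * (1 - s) := by
    rw [hx_def, hs_def, hrpow_add]; ring
  have hx_nn : 0 ≤ x := by
    rw [hx_eq]; nlinarith
  -- Bernoulli: (1 - s)^(p+1) ≥ 1 - (p+1) s ≥ 1/2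
  have hbern : 1 - (p + 1) * s ≤ (1 - s) ^ (p + 1) := by
    have := one_add_mul_self_le_rpow_one_add (s := -s) (by linarith) (p := p + 1) (by linarith)
    rw [show (1 + -s) = 1 - s by ring] at this
    linarith
  have hhalf : (1 : ℝ) / 2 ≤ (1 - s) ^ (p + 1) := by nlinarith
  have hx_pow : x ^ (p + 1) = B t ^ (p + 1) * (1 - s) ^ (p + 1) := by
    rw [hx_eq, Real.mul_rpow (hB t) (by linarith)]
  have key : B t ≤ x + q * x ^ (p + 1) := by
    have hpow_nn : 0 ≤ B t ^ (p + 1) := Real.rpow_nonneg (hB t) _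
    have : (q / 2) * B t ^ (p + 1) ≤ q * x ^ (p + 1) := by
      rw [hx_pow]
      nlinarith [mul_le_mul_of_nonneg_left hhalf (mul_nonneg hq.le hpow_nn)]
    rw [hx_def]; linarith
  by_contra hcon
  push_neg at hcon
  have hx_le : x ^ (p + 1) ≤ B (t + 1) ^ (p + 1) :=
    Real.rpow_le_rpow hx_nn hcon.le (by linarith)
  have := hrec t ht
  nlinarith
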